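/- Let α be a positive integer sequence of length ℓ with n/2 < ℓ < n and sum at most n−1. If u is the number of ones in α and v is the number of twos, then the maximum multiplicity of a term in α equals max(u, v). -/

import Mathlib

lemma stmt17_aux (x : ℕ) (hx : 3 ≤ x) :
    ∀ l : List ℕ, (∀ a ∈ l, 0 < a) → 2 * l.length + l.count x ≤ l.sum + l.count 1
  | [] => by simp
  | a :: l => by
    intro h
    have ha : 0 < a := h a List.mem_cons_self
    have ih := stmt17_aux x hx l (fun b hb => h b (List.mem_cons_of_mem _ hb))
    simp only [List.count_cons, List.length_cons, List.sum_cons]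
    have h1x : ¬ (1 = x) := by omega
    by_cases hax : a = x <;> by_cases ha1 : a = 1 <;> simp [hax, ha1, h1x] <;> omega

theorem stmt17 (n ℓ : ℕ) (h1 : n < 2 * ℓ) (h2 : ℓ < n)
    (α : List ℕ) (hpos : ∀ x ∈ α, 0 < x) (hlen : α.length = ℓ)
    (hsum : α.sum ≤ n - 1) :
    ∀ x ∈ α, α.count x ≤ max (α.count 1) (α.count 2) := by
  intro x hx
  have hx0 : 0 < x := hpos x hx
  rcases eq_or_ne x 1 with rfl | h1'
  · exact le_max_left _ _
  rcases eq_or_ne x 2 with rfl | h2'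
  · exact le_max_right _ _
  have hx3 : 3 ≤ x := by omega
  have key := stmt17_aux x hx3 α hpos
  have hc1 : α.count 1 ≤ α.length := List.count_le_length
  have : α.count x ≤ α.count 1 := by omega
  exact le_trans this (le_max_left _ _)
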